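/- P = ∏_{n∈ℕ} ℤ does not have a direct summand isomorphic to S = ⊕_{n∈ℕ} ℤ. -/

import Mathlib

open Finset

/-- If every power of `b ≥ 2` divides `m`, then `m = 0`. -/
private lemma int_eq_zero_of_forall_pow_dvd (b m : ℤ) (hb : 2 ≤ b)
    (h : ∀ k : ℕ, b ^ k ∣ m) : m = 0 := by
  by_contra hm
  have h1 : b ^ m.natAbs ≤ |m| :=
    Int.le_of_dvd (abs_pos.mpr hm) ((dvd_abs _ _).mpr (h m.natAbs))
  have h2 : (m.natAbs : ℤ) < 2 ^ m.natAbs := by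
    exact_mod_cast (Nat.lt_two_pow_self : m.natAbs < 2 ^ m.natAbs)
  have h3 : (2 : ℤ) ^ m.natAbs ≤ b ^ m.natAbs :=
    pow_le_pow_left₀ (by norm_num) hb m.natAbs
  rw [Int.abs_eq_natAbs] at h1
  omega

/-- Decomposition of `φ x` into a finite sum plus a `d`-divisible remainder. -/
private lemma phi_decomp (φ : (ℕ → ℤ) →+ ℤ) (x : ℕ → ℤ) (F : Finset ℕ) (d : ℤ)
    (hd : ∀ m ∉ F, d ∣ x m) :
    ∃ w : ℤ, φ x = (∑ m ∈ F, x m * φ (Pi.single m 1)) + d * w := by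
  classical
  set y : ℕ → ℤ := fun m => if m ∈ F then x m else 0 with hy
  set w : ℕ → ℤ := fun m => (x m - y m) / d with hw
  refine ⟨φ w, ?_⟩
  have hxyw : x = y + d • w := by
    funext m
    by_cases hm : m ∈ F
    · simp [hy, hw, hm]
    · have : d * ((x m - 0) / d) = x m - 0 := Int.mul_ediv_cancel' (by simpa using hd m hm)
      simp only [Pi.add_apply, Pi.smul_apply, smul_eq_mul, hy, hw, if_neg hm]
      omega
  have hysingle : y = ∑ m ∈ F, (x m) • Pi.single m (1 : ℤ) := by
    funext j
    rw [Finset.sum_apply]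
    by_cases hj : j ∈ F
    · rw [Finset.sum_eq_single j]
      · simp [hy, hj]
      · intro m _ hmj
        simp [Pi.single_apply, hmj]
      · intro h; exact absurd hj h
    · simp only [hy, if_neg hj]
      refine (Finset.sum_eq_zero ?_).symm
      intro m hm
      have : m ≠ j := fun h => hj (h ▸ hm)
      simp [Pi.single_apply, this]
  have : φ x = φ y + φ (d • w) := by rw [hxyw, map_add]
  rw [this, hysingle, map_sum, map_zsmul, smul_eq_mul]
  congr 1
  refine Finset.sum_congr rfl fun m _ => ?_
  rw [map_zsmul, smul_eq_mul]

/-- If base powers divide coordinates, then `φ` vanishes (given `φ` kills the basis). -/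
private lemma phi_vanish_on_divisible (φ : (ℕ → ℤ) →+ ℤ)
    (h : ∀ n, φ (Pi.single n 1) = 0) (c : ℤ) (hc : 2 ≤ c)
    (y : ℕ → ℤ) (hy : ∀ n, c ^ n ∣ y n) : φ y = 0 := by
  apply int_eq_zero_of_forall_pow_dvd c _ hc
  intro k
  obtain ⟨w, hw⟩ := phi_decomp φ y (Finset.range k) (c ^ k)
    (fun m hm => (pow_dvd_pow c (Nat.le_of_not_lt (by simpa using hm))).trans (hy m))
  simp only [h, mul_zero, Finset.sum_const_zero, zero_add] at hw
  exact ⟨w, hw⟩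

/-- Specker part 2: a hom killing the basis is zero. -/
private lemma phi_eq_zero_of_basis (φ : (ℕ → ℤ) →+ ℤ)
    (h : ∀ n, φ (Pi.single n 1) = 0) (x : ℕ → ℤ) : φ x = 0 := by
  have hsplit : ∀ n : ℕ, ∃ a b : ℤ, x n = 2 ^ n * a + 3 ^ n * b := by
    intro n
    have hco : IsCoprime ((2 : ℤ) ^ n) ((3 : ℤ) ^ n) :=
      (Int.isCoprime_iff_gcd_eq_one.mpr (by norm_num)).pow
    obtain ⟨u, v, huv⟩ := hco
    exact ⟨u * x n, v * x n, by linear_combination (x n) * huv.symm⟩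
  choose a b hab using hsplit
  have hx : x = (fun n => 2 ^ n * a n) + fun n => 3 ^ n * b n := funext hab
  rw [hx, map_add,
    phi_vanish_on_divisible φ h 2 (by norm_num) _ (fun n => dvd_mul_right _ _),
    phi_vanish_on_divisible φ h 3 (by norm_num) _ (fun n => dvd_mul_right _ _)]
  simp

/-- Recursive data for Specker part 1: `(d k, s k)`. -/
private def spec (c : ℕ → ℤ) : ℕ → ℤ × ℤ
  | 0 => (1, 0)
  | k + 1 =>
    let d := (spec c k).1
    let s := (spec c k).2
    let a := if 0 ≤ s * c k then -d else d
    (2 * d * |c k|, s + a * c k)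

private lemma abs_sub_le_max (s t : ℤ) (h : 0 ≤ s * t) : |s - t| ≤ max |s| |t| := by
  rcases le_or_gt 0 s with hs | hs <;> rcases le_or_gt 0 t with ht | ht
  · rw [abs_of_nonneg hs, abs_of_nonneg ht, abs_le]
    constructor
    · have := le_max_right s t
      have := le_max_left s t
      omega
    · have := le_max_left s t
      omega
  · have ht0 : s = 0 := by nlinarith
    subst ht0
    simp
  · have hs0 : t = 0 := by nlinarith
    subst hs0
    simp
  · rw [abs_of_neg hs, abs_of_neg ht, abs_le]
    constructor
    · have := le_max_right (-s) (-t)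
      omega
    · have := le_max_left (-s) (-t)
      omega

private lemma spec_d_pos (c : ℕ → ℤ) (hc : ∀ k, c k ≠ 0) (k : ℕ) : 0 < (spec c k).1 := by
  induction k with
  | zero => simp [spec]
  | succ k ih =>
    have h1 : 1 ≤ |c k| := by
      have := abs_pos.mpr (hc k); omega
    show 0 < 2 * (spec c k).1 * |c k|
    nlinarith

private lemma spec_s_bound (c : ℕ → ℤ) (hc : ∀ k, c k ≠ 0) (k : ℕ) :
    2 * |(spec c k).2| ≤ (spec c k).1 := by
  induction k with
  | zero => simp [spec]
  | succ k ih =>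
    have hd := spec_d_pos c hc k
    have h1 : 1 ≤ |c k| := by have := abs_pos.mpr (hc k); omega
    set d := (spec c k).1
    set s := (spec c k).2
    show 2 * |s + (if 0 ≤ s * c k then -d else d) * c k| ≤ 2 * d * |c k|
    have hsd : |s| ≤ d * |c k| := by nlinarith
    by_cases hsc : 0 ≤ s * c k
    · rw [if_pos hsc]
      have h7 : s + -d * c k = s - d * c k := by ring
      rw [h7]
      have key : |s - d * c k| ≤ max |s| |d * c k| := abs_sub_le_max _ _ (by nlinarith)
      rw [abs_mul, abs_of_pos hd, max_eq_right hsd] at key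
      have h8 : 2 * (d * |c k|) = 2 * d * |c k| := by ring
      omega
    · rw [if_neg hsc]
      push_neg at hsc
      have h7 : s + d * c k = s - -(d * c k) := by ring
      rw [h7]
      have key : |s - -(d * c k)| ≤ max |s| |(-(d * c k))| := abs_sub_le_max _ _ (by nlinarith)
      rw [abs_neg, abs_mul, abs_of_pos hd, max_eq_right hsd] at key
      have h8 : 2 * (d * |c k|) = 2 * d * |c k| := by ring
      omega

private lemma spec_d_dvd (c : ℕ → ℤ) {k j : ℕ} (h : k ≤ j) :
    (spec c k).1 ∣ (spec c j).1 := by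
  induction j with
  | zero => simpa [Nat.le_zero.mp h] using dvd_refl _
  | succ j ih =>
    rcases Nat.lt_or_ge k (j + 1) with hk | hk
    · have : (spec c j).1 ∣ (spec c (j + 1)).1 :=
        ⟨2 * |c j|, by show 2 * (spec c j).1 * |c j| = _; ring⟩
      exact (ih (Nat.lt_succ_iff.mp hk)).trans this
    · have : k = j + 1 := le_antisymm h hk
      subst this; rfl

private lemma spec_two_pow_le (c : ℕ → ℤ) (hc : ∀ k, c k ≠ 0) (k : ℕ) :
    2 ^ k ≤ (spec c k).1 := by
  induction k with
  | zero => simp [spec]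
  | succ k ih =>
    have hd := spec_d_pos c hc k
    have h1 : 1 ≤ |c k| := by have := abs_pos.mpr (hc k); omega
    show (2 : ℤ) ^ (k + 1) ≤ 2 * (spec c k).1 * |c k|
    have : (2 : ℤ) ^ (k + 1) = 2 * 2 ^ k := by ring
    nlinarith

private lemma spec_s_succ (c : ℕ → ℤ) (k : ℕ) :
    (spec c (k + 1)).2 = (spec c k).2 +
      (if 0 ≤ (spec c k).2 * c k then -(spec c k).1 else (spec c k).1) * c k := rfl

private lemma spec_s_ne (c : ℕ → ℤ) (hc : ∀ k, c k ≠ 0) (k : ℕ) :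
    (spec c (k + 1)).2 ≠ (spec c k).2 := by
  rw [spec_s_succ]
  have hd := spec_d_pos c hc k
  have hck := hc k
  intro h
  have : (if 0 ≤ (spec c k).2 * c k then -(spec c k).1 else (spec c k).1) * c k = 0 := by omega
  rcases mul_eq_zero.mp this with h' | h'
  · split_ifs at h' <;> omega
  · exact hck h'

private lemma spec_s_sum (c : ℕ → ℤ) (k : ℕ) :
    (spec c k).2 = ∑ j ∈ Finset.range k,
      (if 0 ≤ (spec c j).2 * c j then -(spec c j).1 else (spec c j).1) * c j := by
  induction k with
  | zero => simp [spec]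
  | succ k ih => rw [Finset.sum_range_succ, ← ih, spec_s_succ]

/-- Specker part 1: the basis values of a hom `(ℕ → ℤ) →+ ℤ` are finitely supported. -/
private lemma finite_support (φ : (ℕ → ℤ) →+ ℤ) :
    {n | φ (Pi.single n 1) ≠ 0}.Finite := by
  classical
  by_contra hfin
  set p : ℕ → Prop := fun n => φ (Pi.single n 1) ≠ 0 with hp
  have hinf : (setOf p).Infinite := hfin
  set c : ℕ → ℤ := fun k => φ (Pi.single (Nat.nth p k) 1) with hcdef
  have hc : ∀ k, c k ≠ 0 := fun k => Nat.nth_mem_of_infinite hinf k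
  set d : ℕ → ℤ := fun k => (spec c k).1 with hd
  set s : ℕ → ℤ := fun k => (spec c k).2 with hs
  set a : ℕ → ℤ := fun k => if 0 ≤ s k * c k then -(d k) else d k with ha
  have hda : ∀ k, d k ∣ a k := by
    intro k
    show d k ∣ (if 0 ≤ s k * c k then -(d k) else d k)
    split_ifs
    · exact dvd_neg.mpr dvd_rfl
    · exact dvd_rfl
  set x : ℕ → ℤ := fun m => if hm : p m then a (Nat.count p m) else 0 with hx
  -- the key congruence
  have key : ∀ k, d k ∣ φ x - s k := by
    intro k
    have hdvd : ∀ m ∉ (Finset.range k).image (Nat.nth p), d k ∣ x m := by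
      intro m hm
      by_cases hpm : p m
      · have hxm : x m = a (Nat.count p m) := dif_pos hpm
        rw [hxm]
        have hge : k ≤ Nat.count p m := by
          by_contra hlt
          push_neg at hlt
          exact hm (Finset.mem_image.mpr ⟨Nat.count p m, Finset.mem_range.mpr hlt,
            Nat.nth_count hpm⟩)
        exact (spec_d_dvd c hge).trans (hda _)
      · have hxm : x m = 0 := dif_neg hpm
        rw [hxm]
        exact dvd_zero _
    obtain ⟨w, hw⟩ := phi_decomp φ x ((Finset.range k).image (Nat.nth p)) (d k) hdvd
    · have hsum : ∑ m ∈ (Finset.range k).image (Nat.nth p), x m * φ (Pi.single m 1) = s k := by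
        rw [Finset.sum_image (fun i _ j _ h => Nat.nth_injective hinf h)]
        have hssum : s k = ∑ j ∈ Finset.range k,
            (if 0 ≤ s j * c j then -(d j) else d j) * c j := spec_s_sum c k
        rw [hssum]
        refine Finset.sum_congr rfl fun j _ => ?_
        have hpj : p (Nat.nth p j) := Nat.nth_mem_of_infinite hinf j
        have hxj : x (Nat.nth p j) = a (Nat.count p (Nat.nth p j)) := dif_pos hpj
        rw [hxj, Nat.count_nth_of_infinite hinf j]
      rw [hsum] at hw
      exact ⟨w, by omega⟩
  -- choose a large index
  set m : ℤ := φ x with hm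
  set N : ℕ := (2 * |m|).toNat + 1 with hN
  have hbig : ∀ j, N ≤ j → 2 * |m| < d j := by
    intro j hj
    have h1 : (2 : ℤ) ^ j ≤ d j := spec_two_pow_le c hc j
    have h2 : ((2 * |m|).toNat : ℤ) < 2 ^ N := by
      rw [hN]
      have h3 : (((2 * |m|).toNat : ℤ)) < 2 ^ (2 * |m|).toNat := by
        exact_mod_cast (Nat.lt_two_pow_self : (2 * |m|).toNat < 2 ^ (2 * |m|).toNat)
      have h4 : (2 : ℤ) ^ (2 * |m|).toNat ≤ 2 ^ ((2 * |m|).toNat + 1) := by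
        apply pow_le_pow_right₀ (by norm_num)
        omega
      omega
    have h5 : (2 : ℤ) ^ N ≤ 2 ^ j := pow_le_pow_right₀ (by norm_num) hj
    have h6 : 2 * |m| ≤ ((2 * |m|).toNat : ℤ) := Int.self_le_toNat _
    omega
  have heq : ∀ j, N ≤ j → m = s j := by
    intro j hj
    have h1 := key j
    have h2 : 2 * |s j| ≤ d j := spec_s_bound c hc j
    have h3 := hbig j hj
    have h4 : |m - s j| < d j := by
      have := abs_sub_abs_le_abs_sub m (s j)
      have h5 : |m - s j| ≤ |m| + |s j| := abs_sub m (s j)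
      omega
    have := Int.eq_zero_of_abs_lt_dvd h1 h4
    omega
  have h1 := heq N le_rfl
  have h2 := heq (N + 1) (by omega)
  exact spec_s_ne c hc N (h2.symm.trans h1)

/-- Homs out of the Baer–Specker group into ℤ are countable (Specker). -/
private lemma hom_countable : Countable ((ℕ → ℤ) →+ ℤ) := by
  have hinj : Function.Injective (fun φ : (ℕ → ℤ) →+ ℤ =>
      Finsupp.ofSupportFinite (fun n => φ (Pi.single n 1)) (finite_support φ)) := by
    intro φ ψ h
    have hvals : ∀ n, φ (Pi.single n 1) = ψ (Pi.single n 1) := by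
      intro n
      have := DFunLike.congr_fun h n
      exact this
    have : φ - ψ = 0 := by
      ext1 x
      have := phi_eq_zero_of_basis (φ - ψ) (fun n => by
        simp [AddMonoidHom.sub_apply, hvals n]) x
      simpa using this
    have := sub_eq_zero.mp this
    exact this
  exact hinj.countable

private lemma not_countable_pi : ¬ Countable (ℕ → ℤ) := by
  intro hC
  classical
  have hinj : Function.Injective (fun S : Set ℕ => (fun n => if n ∈ S then (1 : ℤ) else 0)) := by
    intro S T h
    ext n
    have := congrFun h n
    by_cases hS : n ∈ S <;> by_cases hT : n ∈ T <;> simp_all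
  have : Countable (Set ℕ) := hinj.countable
  obtain ⟨f, hf⟩ := countable_iff_exists_injective (Set ℕ) |>.mp this
  exact Function.cantor_injective (fun S => f S) hf

theorem stmt_11 : ¬ ∃ A B : AddSubgroup (ℕ → ℤ),
    IsCompl A B ∧ Nonempty (A ≃+ (ℕ →₀ ℤ)) := by
  rintro ⟨A, B, hAB, ⟨e⟩⟩
  have hAB' : IsCompl (AddSubgroup.toIntSubmodule A) (AddSubgroup.toIntSubmodule B) :=
    (AddSubgroup.toIntSubmodule : AddSubgroup (ℕ → ℤ) ≃o _).isCompl hAB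
  set A' := AddSubgroup.toIntSubmodule A with hA'
  set pr := Submodule.linearProjOfIsCompl A' (AddSubgroup.toIntSubmodule B) hAB' with hpr
  let j : A' →+ A :=
    { toFun := fun v => ⟨v.1, v.2⟩
      map_zero' := rfl
      map_add' := fun _ _ => rfl }
  let ρ : (ℕ → ℤ) →+ (ℕ →₀ ℤ) :=
    e.toAddMonoidHom.comp (j.comp pr.toAddMonoidHom)
  have hρ : Function.Surjective ρ := by
    intro f
    refine ⟨((e.symm f : A) : ℕ → ℤ), ?_⟩
    have hmem : ((e.symm f : A) : ℕ → ℤ) ∈ A' := (e.symm f).2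
    have hpr2 : pr ((e.symm f : A) : ℕ → ℤ) = ⟨((e.symm f : A) : ℕ → ℤ), hmem⟩ :=
      Submodule.linearProjOfIsCompl_apply_left hAB' ⟨_, hmem⟩
    show e (j (pr _)) = f
    rw [hpr2]
    have : j ⟨((e.symm f : A) : ℕ → ℤ), hmem⟩ = e.symm f := rfl
    rw [this, AddEquiv.apply_symm_apply]
  -- dualize: homs from ℕ→₀ℤ inject into homs from ℕ→ℤ
  have hΦ : Function.Injective (fun g : (ℕ →₀ ℤ) →+ ℤ => g.comp ρ) := by
    intro g₁ g₂ h
    refine AddMonoidHom.ext fun f => ?_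
    obtain ⟨v, hv⟩ := hρ f
    rw [← hv]
    exact DFunLike.congr_fun h v
  have hcnt : Countable ((ℕ →₀ ℤ) →+ ℤ) := by
    have := hom_countable
    exact hΦ.countable
  -- but ℕ→ℤ injects into homs from ℕ→₀ℤ
  have hΨ : Function.Injective (fun v : ℕ → ℤ =>
      Finsupp.liftAddHom (fun n => AddMonoidHom.mulRight (v n))) := by
    intro v w h
    funext n
    have := DFunLike.congr_fun h (Finsupp.single n 1)
    rwa [Finsupp.liftAddHom_apply_single, Finsupp.liftAddHom_apply_single,
      AddMonoidHom.mulRight_apply, AddMonoidHom.mulRight_apply, one_mul, one_mul] at this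
  exact not_countable_pi hΨ.countable
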